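/- arXiv:1402.1719 — 7 statements merged into one kernel-verified Lean document; each statement's English description precedes it below -/
import Mathlib

section
/- The set Ω = {(M_S, M_I, A, H, I) ∈ ℝ⁵₊ : M_S + M_I ≤ 1, A ≤ 1, H + I ≤ 1} is positively invariant for the system: if a solution starts in Ω, it remains in Ω for all t ≥ 0. -/
open Set Filter Topology

private lemma posPart_slope_limit {g : ℝ → ℝ} {g' x : ℝ} (hg : HasDerivAt g g' x) :
    ∃ L : ℝ, L ≤ max g' 0 ∧ (g x < 0 → L ≤ 0) ∧
      Filter.Tendsto (fun z => (z - x)⁻¹ * (max (g z) 0 - max (g x) 0)) (𝓝[>] x) (𝓝 L) := by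
  have hslope : Filter.Tendsto (slope g x) (𝓝[>] x) (𝓝 g') :=
    (hasDerivAt_iff_tendsto_slope.mp hg).mono_left
      (nhdsWithin_mono x fun z hz => ne_of_gt hz)
  rcases lt_trichotomy (g x) 0 with h | h | h
  · refine ⟨0, le_max_right _ _, fun _ => le_rfl, ?_⟩
    have hev : ∀ᶠ z in 𝓝[>] x, g z < 0 :=
      (hg.continuousAt.eventually_lt_const h).filter_mono nhdsWithin_le_nhds
    refine Filter.Tendsto.congr' ?_ tendsto_const_nhds
    filter_upwards [hev] with z hz
    rw [max_eq_right hz.le, max_eq_right h.le]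
    ring
  · refine ⟨max g' 0, le_rfl, fun hc => absurd h hc.ne, ?_⟩
    have hmax : Filter.Tendsto (fun z => max (slope g x z) 0) (𝓝[>] x) (𝓝 (max g' 0)) :=
      hslope.max tendsto_const_nhds
    refine Filter.Tendsto.congr' ?_ hmax
    filter_upwards [self_mem_nhdsWithin] with z hz
    have hzx : (0:ℝ) < z - x := sub_pos.mpr hz
    rw [slope_def_field, h, sub_zero, max_eq_right (le_refl (0:ℝ)), sub_zero]
    rcases le_total (g z) 0 with hgz | hgz
    · rw [max_eq_right (div_nonpos_iff.mpr (Or.inr ⟨hgz, hzx.le⟩)), max_eq_right hgz]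
      ring
    · rw [max_eq_left (div_nonneg hgz hzx.le), max_eq_left hgz]
      field_simp
  · refine ⟨g', le_max_left _ _, fun hc => absurd (hc.trans h) (lt_irrefl _), ?_⟩
    have hev : ∀ᶠ z in 𝓝[>] x, 0 < g z :=
      (hg.continuousAt.eventually_const_lt h).filter_mono nhdsWithin_le_nhds
    refine Filter.Tendsto.congr' ?_ hslope
    filter_upwards [hev] with z hz
    rw [max_eq_left hz.le, max_eq_left h.le, slope_def_field, div_eq_inv_mul]

private lemma Gterm_bound1 {β G m pm : ℝ} (hβ : 0 ≤ β) (hG : |G| ≤ 4) (hm : m ≤ 0)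
    (hpm : -m ≤ pm) : β * G * m ≤ 4 * (β * pm) := by
  have h1 : G * m ≤ |G| * (-m) := by
    calc G * m ≤ |G * m| := le_abs_self _
    _ = |G| * |m| := abs_mul _ _
    _ = |G| * (-m) := by rw [abs_of_nonpos hm]
  have h2 : |G| * (-m) ≤ 4 * (-m) := mul_le_mul_of_nonneg_right hG (by linarith)
  have h3 : β * (G * m) ≤ β * (4 * pm) := mul_le_mul_of_nonneg_left (by linarith) hβ
  linarith

private lemma Gterm_bound2 {β G m i pm pi : ℝ} (hβ : 0 ≤ β) (hG4 : |G| ≤ 4)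
    (hGi : |G| ≤ 2 * |i|) (hGpos : 0 ≤ i → 0 ≤ G) (hGneg : i ≤ 0 → G ≤ 0)
    (hm2 : m ≤ 2) (hpm : -m ≤ pm) (hpmn : 0 ≤ pm) (hpi : -i ≤ pi) (hpin : 0 ≤ pi) :
    -(β * G * m) ≤ 4 * (β * pm) + 4 * (β * pi) := by
  rcases le_or_gt 0 m with hm | hm
  · rcases le_or_gt 0 i with hi | hi
    · have hg := hGpos hi
      have h1 : 0 ≤ β * G * m := mul_nonneg (mul_nonneg hβ hg) hm
      have h2 : 0 ≤ β * pm := mul_nonneg hβ hpmn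
      have h3 : 0 ≤ β * pi := mul_nonneg hβ hpin
      linarith
    · have hg : G ≤ 0 := hGneg hi.le
      have h1 : -G ≤ 2 * (-i) := by
        have := hGi
        rwa [abs_of_nonpos hg, abs_of_nonpos hi.le] at this
      have h2 : (-G) * m ≤ (2 * (-i)) * 2 :=
        mul_le_mul h1 hm2 hm (by linarith)
      have h3 : β * ((-G) * m) ≤ β * (4 * (-i)) := mul_le_mul_of_nonneg_left (by linarith) hβ
      have h4 : β * (-i) ≤ β * pi := mul_le_mul_of_nonneg_left hpi hβ
      have h5 : 0 ≤ β * pm := mul_nonneg hβ hpmn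
      nlinarith
  · have h1 : G * (-m) ≤ |G| * (-m) := mul_le_mul_of_nonneg_right (le_abs_self _) (by linarith)
    have h2 : |G| * (-m) ≤ 4 * (-m) := mul_le_mul_of_nonneg_right hG4 (by linarith)
    have h3 : β * (G * (-m)) ≤ β * (4 * pm) := mul_le_mul_of_nonneg_left (by linarith) hβ
    have h4 : 0 ≤ β * pi := mul_nonneg hβ hpin
    nlinarith

private lemma abs_div_le2 {i d : ℝ} (hd : 1/2 ≤ d) : |i / d| ≤ 2 * |i| := by
  have hdp : (0:ℝ) < d := by linarith
  rw [abs_div, abs_of_pos hdp, div_le_iff₀ hdp]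
  nlinarith [abs_nonneg i]

set_option maxHeartbeats 2000000 in
/-- Positive invariance of the region Ω for the mosquito-borne epidemic model. -/
theorem omega_positively_invariant
    (γ k μ1 μ2 μH β1 β2 σ α1 α2 : ℝ)
    (hγ : 0 < γ) (hk : 0 < k) (hμ1 : 0 < μ1) (hμ2 : 0 < μ2) (hμH : 0 < μH)
    (hβ1 : 0 < β1) (hβ2 : 0 < β2) (hσ : 0 < σ) (hα1 : 0 ≤ α1) (hα2 : 0 ≤ α2)
    (MS MI A H I : ℝ → ℝ)
    (hMS : ∀ t, 0 ≤ t → HasDerivAt MS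
      (γ / k * A t * (1 - MS t - MI t) - μ1 * MS t
        - β1 * (I t / (1 + α1 * I t)) * MS t) t)
    (hMI : ∀ t, 0 ≤ t → HasDerivAt MI
      (β1 * (I t / (1 + α1 * I t)) * MS t - μ1 * MI t) t)
    (hA : ∀ t, 0 ≤ t → HasDerivAt A
      (k * (1 - A t) * (MS t + MI t) - μ2 * A t - γ * A t) t)
    (hH : ∀ t, 0 ≤ t → HasDerivAt H
      (μH - μH * H t - β2 * (MI t / (1 + α2 * MI t)) * H t) t)
    (hI : ∀ t, 0 ≤ t → HasDerivAt I
      (β2 * (MI t / (1 + α2 * MI t)) * H t - (σ + μH) * I t) t)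
    (h0 : 0 ≤ MS 0 ∧ 0 ≤ MI 0 ∧ 0 ≤ A 0 ∧ 0 ≤ H 0 ∧ 0 ≤ I 0 ∧
          MS 0 + MI 0 ≤ 1 ∧ A 0 ≤ 1 ∧ H 0 + I 0 ≤ 1) :
    ∀ t, 0 ≤ t →
      0 ≤ MS t ∧ 0 ≤ MI t ∧ 0 ≤ A t ∧ 0 ≤ H t ∧ 0 ≤ I t ∧
      MS t + MI t ≤ 1 ∧ A t ≤ 1 ∧ H t + I t ≤ 1 := by
  obtain ⟨h01, h02, h03, h04, h05, h06, h07, h08⟩ := h0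
  have hc : 0 < γ / k := div_pos hγ hk
  obtain ⟨η, hηdef⟩ : ∃ η : ℝ, η = 1 / (2 * (α1 + α2 + 1)) := ⟨_, rfl⟩
  have hs0 : (0:ℝ) < 2 * (α1 + α2 + 1) := by positivity
  have hηpos : 0 < η := by rw [hηdef]; positivity
  have hηhalf : η ≤ 1 / 2 := by
    rw [hηdef, div_le_div_iff₀ hs0 (by norm_num)]
    nlinarith
  have hηα1 : α1 * η ≤ 1 / 2 := by
    rw [hηdef, mul_one_div, div_le_div_iff₀ hs0 (by norm_num)]
    nlinarith
  have hηα2 : α2 * η ≤ 1 / 2 := by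
    rw [hηdef, mul_one_div, div_le_div_iff₀ hs0 (by norm_num)]
    nlinarith
  obtain ⟨KK, hKKdef⟩ : ∃ K : ℝ, K = 8 * (γ / k) + 12 * β1 + 12 * β2 + 4 * k + σ := ⟨_, rfl⟩
  obtain ⟨F, hFdef⟩ : ∃ F : ℝ → ℝ, F = fun t =>
      max (-MS t) 0 + max (-MI t) 0 + max (-A t) 0 + max (-H t) 0 + max (-I t) 0 +
      max (MS t + MI t - 1) 0 + max (A t - 1) 0 + max (H t + I t - 1) 0 := ⟨_, rfl⟩
  have hFnonneg : ∀ t, 0 ≤ F t := by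
    intro t
    simp only [hFdef]
    have := le_max_right (-MS t) 0
    have := le_max_right (-MI t) 0
    have := le_max_right (-A t) 0
    have := le_max_right (-H t) 0
    have := le_max_right (-I t) 0
    have := le_max_right (MS t + MI t - 1) 0
    have := le_max_right (A t - 1) 0
    have := le_max_right (H t + I t - 1) 0
    linarith
  have hFcont : ∀ t, 0 ≤ t → ContinuousAt F t := by
    intro t ht
    have c1 := (hMS t ht).continuousAt
    have c2 := (hMI t ht).continuousAt
    have c3 := (hA t ht).continuousAt
    have c4 := (hH t ht).continuousAt
    have c5 := (hI t ht).continuousAt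
    simp only [hFdef]
    exact ((((((((c1.neg.max continuousAt_const).add (c2.neg.max continuousAt_const)).add
      (c3.neg.max continuousAt_const)).add (c4.neg.max continuousAt_const)).add
      (c5.neg.max continuousAt_const)).add
      (((c1.add c2).sub continuousAt_const).max continuousAt_const)).add
      ((c3.sub continuousAt_const).max continuousAt_const)).add
      (((c4.add c5).sub continuousAt_const).max continuousAt_const))
  have key : ∀ T, 0 ≤ T → F T = 0 := by
    intro T hT
    have hsub : Icc (0:ℝ) T ⊆ {t | F t = 0} := by
      apply IsClosed.Icc_subset_of_forall_exists_gt
      · have hFcontOn : ContinuousOn F (Icc 0 T) :=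
          fun u hu => (hFcont u hu.1).continuousWithinAt
        have h1 : IsClosed (Icc (0:ℝ) T ∩ F ⁻¹' {0}) :=
          hFcontOn.preimage_isClosed_of_isClosed isClosed_Icc isClosed_singleton
        have h2 : {t | F t = 0} ∩ Icc (0:ℝ) T = Icc (0:ℝ) T ∩ F ⁻¹' {0} := by
          ext u
          simp only [Set.mem_inter_iff, Set.mem_setOf_eq, Set.mem_preimage,
            Set.mem_singleton_iff, and_comm]
        rw [h2]; exact h1
      · show F 0 = 0
        simp only [hFdef]
        rw [max_eq_right (by linarith : -MS 0 ≤ 0), max_eq_right (by linarith : -MI 0 ≤ 0),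
          max_eq_right (by linarith : -A 0 ≤ 0), max_eq_right (by linarith : -H 0 ≤ 0),
          max_eq_right (by linarith : -I 0 ≤ 0),
          max_eq_right (by linarith : MS 0 + MI 0 - 1 ≤ 0),
          max_eq_right (by linarith : A 0 - 1 ≤ 0),
          max_eq_right (by linarith : H 0 + I 0 - 1 ≤ 0)]
        norm_num
      · rintro x ⟨hxs, hx0, hxT⟩ y hy
        have hFx : F x = 0 := hxs
        -- the state at x is in Ω
        have hFxe : max (-MS x) 0 + max (-MI x) 0 + max (-A x) 0 + max (-H x) 0 +
            max (-I x) 0 + max (MS x + MI x - 1) 0 + max (A x - 1) 0 +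
            max (H x + I x - 1) 0 = 0 := by
          simpa only [hFdef] using hFx
        have n1 := le_max_right (-MS x) 0
        have n2 := le_max_right (-MI x) 0
        have n3 := le_max_right (-A x) 0
        have n4 := le_max_right (-H x) 0
        have n5 := le_max_right (-I x) 0
        have n6 := le_max_right (MS x + MI x - 1) 0
        have n7 := le_max_right (A x - 1) 0
        have n8 := le_max_right (H x + I x - 1) 0
        have l1 := le_max_left (-MS x) 0
        have l2 := le_max_left (-MI x) 0
        have l3 := le_max_left (-A x) 0
        have l4 := le_max_left (-H x) 0
        have l5 := le_max_left (-I x) 0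
        have l6 := le_max_left (MS x + MI x - 1) 0
        have l7 := le_max_left (A x - 1) 0
        have l8 := le_max_left (H x + I x - 1) 0
        have hms0 : 0 ≤ MS x := by linarith
        have hmi0 : 0 ≤ MI x := by linarith
        have ha0 : 0 ≤ A x := by linarith
        have hh0 : 0 ≤ H x := by linarith
        have hi0 : 0 ≤ I x := by linarith
        have hs6 : MS x + MI x ≤ 1 := by linarith
        have ha7 : A x ≤ 1 := by linarith
        have hs8 : H x + I x ≤ 1 := by linarith
        -- neighborhood where all coordinates stay in (-η, 2)
        have hev : ∀ᶠ z in 𝓝 x, (-η < MS z ∧ MS z < 2) ∧ (-η < MI z ∧ MI z < 2) ∧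
            (-η < A z ∧ A z < 2) ∧ (-η < H z ∧ H z < 2) ∧ (-η < I z ∧ I z < 2) := by
          have e1 : ∀ᶠ z in 𝓝 x, MS z ∈ Ioo (-η) (2:ℝ) :=
            (hMS x hx0).continuousAt.preimage_mem_nhds
              (Ioo_mem_nhds (by linarith) (by linarith))
          have e2 : ∀ᶠ z in 𝓝 x, MI z ∈ Ioo (-η) (2:ℝ) :=
            (hMI x hx0).continuousAt.preimage_mem_nhds
              (Ioo_mem_nhds (by linarith) (by linarith))
          have e3 : ∀ᶠ z in 𝓝 x, A z ∈ Ioo (-η) (2:ℝ) :=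
            (hA x hx0).continuousAt.preimage_mem_nhds
              (Ioo_mem_nhds (by linarith) (by linarith))
          have e4 : ∀ᶠ z in 𝓝 x, H z ∈ Ioo (-η) (2:ℝ) :=
            (hH x hx0).continuousAt.preimage_mem_nhds
              (Ioo_mem_nhds (by linarith) (by linarith))
          have e5 : ∀ᶠ z in 𝓝 x, I z ∈ Ioo (-η) (2:ℝ) :=
            (hI x hx0).continuousAt.preimage_mem_nhds
              (Ioo_mem_nhds (by linarith) (by linarith))
          filter_upwards [e1, e2, e3, e4, e5] with z m1 m2 m3 m4 m5
          exact ⟨⟨m1.1, m1.2⟩, ⟨m2.1, m2.2⟩, ⟨m3.1, m3.2⟩, ⟨m4.1, m4.2⟩, ⟨m5.1, m5.2⟩⟩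
        obtain ⟨δ, hδ, hball⟩ := Metric.eventually_nhds_iff.mp hev
        set z₀ : ℝ := min y (x + δ / 2) with hz₀def
        have hxz : x < z₀ := lt_min hy (by linarith)
        have hN : ∀ t ∈ Icc x z₀, (-η < MS t ∧ MS t < 2) ∧ (-η < MI t ∧ MI t < 2) ∧
            (-η < A t ∧ A t < 2) ∧ (-η < H t ∧ H t < 2) ∧ (-η < I t ∧ I t < 2) := by
          intro t ht
          apply hball
          rw [Real.dist_eq, abs_of_nonneg (sub_nonneg.mpr ht.1)]
          have h1 : t ≤ x + δ / 2 := le_trans ht.2 (min_le_right _ _)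
          linarith
        have hcontOn : ContinuousOn F (Icc x z₀) :=
          fun u hu => (hFcont u (le_trans hx0 hu.1)).continuousWithinAt
        have hbound : ∀ t ∈ Ico x z₀, KK * F t ≤ KK * F t + 0 :=
          fun t _ => by simp
        have hderiv : ∀ t ∈ Ico x z₀, ∀ r, KK * F t < r →
            ∃ᶠ z in 𝓝[>] t, (z - t)⁻¹ * (F z - F t) < r := by
          intro t ht r hr
          have ht0 : (0:ℝ) ≤ t := le_trans hx0 ht.1
          obtain ⟨⟨b1, b2⟩, ⟨b3, b4⟩, ⟨b5, b6⟩, ⟨b7, b8⟩, ⟨b9, b10⟩⟩ :=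
            hN t ⟨ht.1, ht.2.le⟩
          -- denominators bounded below
          have hd1 : (1:ℝ)/2 ≤ 1 + α1 * I t := by
            have h := mul_le_mul_of_nonneg_left b9.le hα1
            linarith [hηα1]
          have hd2 : (1:ℝ)/2 ≤ 1 + α2 * MI t := by
            have h := mul_le_mul_of_nonneg_left b3.le hα2
            linarith [hηα2]
          have hd1p : (0:ℝ) < 1 + α1 * I t := by linarith
          have hd2p : (0:ℝ) < 1 + α2 * MI t := by linarith
          have hG1abs : |I t / (1 + α1 * I t)| ≤ 2 * |I t| := abs_div_le2 hd1
          have hG2abs : |MI t / (1 + α2 * MI t)| ≤ 2 * |MI t| := abs_div_le2 hd2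
          have hIt2 : |I t| ≤ 2 := abs_le.mpr ⟨by linarith, by linarith⟩
          have hMIt2 : |MI t| ≤ 2 := abs_le.mpr ⟨by linarith, by linarith⟩
          have hG14 : |I t / (1 + α1 * I t)| ≤ 4 := by linarith
          have hG24 : |MI t / (1 + α2 * MI t)| ≤ 4 := by linarith
          have hG1pos : 0 ≤ I t → 0 ≤ I t / (1 + α1 * I t) :=
            fun h => div_nonneg h hd1p.le
          have hG1neg : I t ≤ 0 → I t / (1 + α1 * I t) ≤ 0 :=
            fun h => div_nonpos_iff.mpr (Or.inr ⟨h, hd1p.le⟩)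
          have hG2pos : 0 ≤ MI t → 0 ≤ MI t / (1 + α2 * MI t) :=
            fun h => div_nonneg h hd2p.le
          have hG2neg : MI t ≤ 0 → MI t / (1 + α2 * MI t) ≤ 0 :=
            fun h => div_nonpos_iff.mpr (Or.inr ⟨h, hd2p.le⟩)
          -- positive parts
          have hp1a := le_max_left (-MS t) 0
          have hp1b := le_max_right (-MS t) 0
          have hp2a := le_max_left (-MI t) 0
          have hp2b := le_max_right (-MI t) 0
          have hp3a := le_max_left (-A t) 0
          have hp3b := le_max_right (-A t) 0
          have hp4a := le_max_left (-H t) 0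
          have hp4b := le_max_right (-H t) 0
          have hp5a := le_max_left (-I t) 0
          have hp5b := le_max_right (-I t) 0
          have hp6a := le_max_left (MS t + MI t - 1) 0
          have hp6b := le_max_right (MS t + MI t - 1) 0
          have hp7a := le_max_left (A t - 1) 0
          have hp7b := le_max_right (A t - 1) 0
          have hp8a := le_max_left (H t + I t - 1) 0
          have hp8b := le_max_right (H t + I t - 1) 0
          have hFte : F t = max (-MS t) 0 + max (-MI t) 0 + max (-A t) 0 + max (-H t) 0 +
              max (-I t) 0 + max (MS t + MI t - 1) 0 + max (A t - 1) 0 +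
              max (H t + I t - 1) 0 := by simp only [hFdef]
          have hp1F : max (-MS t) 0 ≤ F t := by rw [hFte]; linarith
          have hp2F : max (-MI t) 0 ≤ F t := by rw [hFte]; linarith
          have hp3F : max (-A t) 0 ≤ F t := by rw [hFte]; linarith
          have hp4F : max (-H t) 0 ≤ F t := by rw [hFte]; linarith
          have hp5F : max (-I t) 0 ≤ F t := by rw [hFte]; linarith
          have hp6F : max (MS t + MI t - 1) 0 ≤ F t := by rw [hFte]; linarith
          have hp7F : max (A t - 1) 0 ≤ F t := by rw [hFte]; linarith
          -- the eight one-sided limits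
          obtain ⟨L1, hL1m, hL1n, hT1⟩ := posPart_slope_limit (hMS t ht0).neg
          obtain ⟨L2, hL2m, hL2n, hT2⟩ := posPart_slope_limit (hMI t ht0).neg
          obtain ⟨L3, hL3m, hL3n, hT3⟩ := posPart_slope_limit (hA t ht0).neg
          obtain ⟨L4, hL4m, hL4n, hT4⟩ := posPart_slope_limit (hH t ht0).neg
          obtain ⟨L5, hL5m, hL5n, hT5⟩ := posPart_slope_limit (hI t ht0).neg
          obtain ⟨L6, hL6m, hL6n, hT6⟩ :=
            posPart_slope_limit (((hMS t ht0).add (hMI t ht0)).sub_const 1)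
          obtain ⟨L7, hL7m, hL7n, hT7⟩ := posPart_slope_limit ((hA t ht0).sub_const 1)
          obtain ⟨L8, hL8m, hL8n, hT8⟩ :=
            posPart_slope_limit (((hH t ht0).add (hI t ht0)).sub_const 1)
          have hsum : Filter.Tendsto (fun z => (z - t)⁻¹ * (F z - F t)) (𝓝[>] t)
              (𝓝 (L1 + L2 + L3 + L4 + L5 + L6 + L7 + L8)) := by
            refine ((((((((hT1.add hT2).add hT3).add hT4).add hT5).add hT6).add
              hT7).add hT8)).congr fun z => ?_
            simp only [hFdef, Pi.add_apply, Pi.neg_apply]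
            ring
          -- component bounds
          have hK1 : L1 ≤ (5 * (γ/k) + 4 * β1) * F t := by
            rcases lt_or_ge (-MS t) 0 with hneg | hpos
            · exact (hL1n hneg).trans (mul_nonneg (by positivity) (hFnonneg t))
            · refine hL1m.trans (max_le ?_ (mul_nonneg (by positivity) (hFnonneg t)))
              have hms : MS t ≤ 0 := by linarith
              have t2 : μ1 * MS t ≤ 0 := by linarith [mul_nonneg hμ1.le (neg_nonneg.mpr hms)]
              have t3 : β1 * (I t / (1 + α1 * I t)) * MS t ≤ 4 * (β1 * max (-MS t) 0) :=
                Gterm_bound1 hβ1.le hG14 hms hp1a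
              have t1 : -(A t * (1 - MS t - MI t)) ≤
                  3 * max (-A t) 0 + 2 * max (MS t + MI t - 1) 0 := by
                rcases le_or_gt 0 (A t) with ha | ha
                · have h1 : A t * (MS t + MI t - 1) ≤ A t * max (MS t + MI t - 1) 0 :=
                    mul_le_mul_of_nonneg_left hp6a ha
                  have h2 : A t * max (MS t + MI t - 1) 0 ≤ 2 * max (MS t + MI t - 1) 0 :=
                    mul_le_mul_of_nonneg_right (by linarith) hp6b
                  linarith [hp3b]
                · have h1 : (-A t) * (1 - MS t - MI t) ≤ (-A t) * 3 :=
                    mul_le_mul_of_nonneg_left (by linarith) (by linarith)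
                  have h2 : (-A t) * 3 ≤ max (-A t) 0 * 3 :=
                    mul_le_mul_of_nonneg_right hp3a (by norm_num)
                  linarith [hp6b]
              have t1' : γ/k * (-(A t * (1 - MS t - MI t))) ≤
                  γ/k * (3 * max (-A t) 0 + 2 * max (MS t + MI t - 1) 0) :=
                mul_le_mul_of_nonneg_left t1 hc.le
              have e3 : γ/k * max (-A t) 0 ≤ γ/k * F t :=
                mul_le_mul_of_nonneg_left hp3F hc.le
              have e6 : γ/k * max (MS t + MI t - 1) 0 ≤ γ/k * F t :=
                mul_le_mul_of_nonneg_left hp6F hc.le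
              have f1 : β1 * max (-MS t) 0 ≤ β1 * F t :=
                mul_le_mul_of_nonneg_left hp1F hβ1.le
              linarith only [t1', t2, t3, e3, e6, f1]
          have hK2 : L2 ≤ (8 * β1) * F t := by
            rcases lt_or_ge (-MI t) 0 with hneg | hpos
            · exact (hL2n hneg).trans (mul_nonneg (by positivity) (hFnonneg t))
            · refine hL2m.trans (max_le ?_ (mul_nonneg (by positivity) (hFnonneg t)))
              have hmi : MI t ≤ 0 := by linarith
              have u1 := Gterm_bound2 hβ1.le hG14 hG1abs hG1pos hG1neg b2.le hp1a hp1b hp5a hp5b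
              have u2 : μ1 * MI t ≤ 0 := by linarith [mul_nonneg hμ1.le (neg_nonneg.mpr hmi)]
              have f1 : β1 * max (-MS t) 0 ≤ β1 * F t :=
                mul_le_mul_of_nonneg_left hp1F hβ1.le
              have f5 : β1 * max (-I t) 0 ≤ β1 * F t :=
                mul_le_mul_of_nonneg_left hp5F hβ1.le
              linarith only [u1, u2, f1, f5]
          have hK3 : L3 ≤ (3 * k) * F t := by
            rcases lt_or_ge (-A t) 0 with hneg | hpos
            · exact (hL3n hneg).trans (mul_nonneg (by positivity) (hFnonneg t))
            · refine hL3m.trans (max_le ?_ (mul_nonneg (by positivity) (hFnonneg t)))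
              have ha : A t ≤ 0 := by linarith
              have v2 : μ2 * A t ≤ 0 := by linarith [mul_nonneg hμ2.le (neg_nonneg.mpr ha)]
              have v3 : γ * A t ≤ 0 := by linarith [mul_nonneg hγ.le (neg_nonneg.mpr ha)]
              have v1 : (1 - A t) * (-(MS t + MI t)) ≤
                  3/2 * (max (-MS t) 0 + max (-MI t) 0) := by
                rcases le_or_gt (MS t + MI t) 0 with hs | hs
                · have h1 : (1 - A t) * (-(MS t + MI t)) ≤ 3/2 * (-(MS t + MI t)) :=
                    mul_le_mul_of_nonneg_right (by linarith [hηhalf]) (by linarith)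
                  linarith
                · have h1 : (1 - A t) * (-(MS t + MI t)) ≤ 0 :=
                    mul_nonpos_iff.mpr (Or.inl ⟨by linarith, by linarith⟩)
                  linarith
              have v1' : k * ((1 - A t) * (-(MS t + MI t))) ≤
                  k * (3/2 * (max (-MS t) 0 + max (-MI t) 0)) :=
                mul_le_mul_of_nonneg_left v1 hk.le
              have g1 : k * max (-MS t) 0 ≤ k * F t := mul_le_mul_of_nonneg_left hp1F hk.le
              have g2 : k * max (-MI t) 0 ≤ k * F t := mul_le_mul_of_nonneg_left hp2F hk.le
              linarith only [v1', v2, v3, g1, g2]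
          have hK4 : L4 ≤ (4 * β2) * F t := by
            rcases lt_or_ge (-H t) 0 with hneg | hpos
            · exact (hL4n hneg).trans (mul_nonneg (by positivity) (hFnonneg t))
            · refine hL4m.trans (max_le ?_ (mul_nonneg (by positivity) (hFnonneg t)))
              have hh : H t ≤ 0 := by linarith
              have w1 : μH * H t ≤ 0 := by linarith [mul_nonneg hμH.le (neg_nonneg.mpr hh)]
              have w2 : β2 * (MI t / (1 + α2 * MI t)) * H t ≤ 4 * (β2 * max (-H t) 0) :=
                Gterm_bound1 hβ2.le hG24 hh hp4a
              have f4 : β2 * max (-H t) 0 ≤ β2 * F t :=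
                mul_le_mul_of_nonneg_left hp4F hβ2.le
              linarith only [w1, w2, f4, hμH.le]
          have hK5 : L5 ≤ (8 * β2) * F t := by
            rcases lt_or_ge (-I t) 0 with hneg | hpos
            · exact (hL5n hneg).trans (mul_nonneg (by positivity) (hFnonneg t))
            · refine hL5m.trans (max_le ?_ (mul_nonneg (by positivity) (hFnonneg t)))
              have hi : I t ≤ 0 := by linarith
              have u1 := Gterm_bound2 hβ2.le hG24 hG2abs hG2pos hG2neg b8.le hp4a hp4b hp2a hp2b
              have u2 : (σ + μH) * I t ≤ 0 := by
                linarith [mul_nonneg (by linarith : (0:ℝ) ≤ σ + μH) (neg_nonneg.mpr hi)]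
              have f4 : β2 * max (-H t) 0 ≤ β2 * F t :=
                mul_le_mul_of_nonneg_left hp4F hβ2.le
              have f2 : β2 * max (-MI t) 0 ≤ β2 * F t :=
                mul_le_mul_of_nonneg_left hp2F hβ2.le
              linarith only [u1, u2, f4, f2]
          have hK6 : L6 ≤ (3 * (γ/k)) * F t := by
            rcases lt_or_ge (MS t + MI t - 1) 0 with hneg | hpos
            · exact (hL6n hneg).trans (mul_nonneg (by positivity) (hFnonneg t))
            · refine hL6m.trans (max_le ?_ (mul_nonneg (by positivity) (hFnonneg t)))
              have x1 : A t * (1 - MS t - MI t) ≤ 3 * max (-A t) 0 := by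
                rcases le_or_gt 0 (A t) with ha | ha
                · have h1 : A t * (1 - MS t - MI t) ≤ 0 :=
                    mul_nonpos_iff.mpr (Or.inl ⟨ha, by linarith⟩)
                  linarith
                · have h1 : (-A t) * (MS t + MI t - 1) ≤ max (-A t) 0 * 3 :=
                    mul_le_mul hp3a (by linarith) (by linarith) hp3b
                  linarith
              have x1' : γ/k * (A t * (1 - MS t - MI t)) ≤ γ/k * (3 * max (-A t) 0) :=
                mul_le_mul_of_nonneg_left x1 hc.le
              have x2 : 0 ≤ μ1 * (MS t + MI t) := mul_nonneg hμ1.le (by linarith)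
              have e3 : γ/k * max (-A t) 0 ≤ γ/k * F t :=
                mul_le_mul_of_nonneg_left hp3F hc.le
              linarith only [x1', x2, e3]
          have hK7 : L7 ≤ k * F t := by
            rcases lt_or_ge (A t - 1) 0 with hneg | hpos
            · exact (hL7n hneg).trans (mul_nonneg hk.le (hFnonneg t))
            · refine hL7m.trans (max_le ?_ (mul_nonneg hk.le (hFnonneg t)))
              have y2 : 0 ≤ μ2 * A t := mul_nonneg hμ2.le (by linarith)
              have y3 : 0 ≤ γ * A t := mul_nonneg hγ.le (by linarith)
              have y1 : (1 - A t) * (MS t + MI t) ≤ max (A t - 1) 0 := by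
                rcases le_or_gt 0 (MS t + MI t) with hs | hs
                · have h1 : (1 - A t) * (MS t + MI t) ≤ 0 :=
                    mul_nonpos_iff.mpr (Or.inr ⟨by linarith, hs⟩)
                  linarith
                · have h1 : (A t - 1) * (-(MS t + MI t)) ≤ max (A t - 1) 0 * 1 :=
                    mul_le_mul hp7a (by linarith [hηhalf]) (by linarith) hp7b
                  linarith
              have y1' : k * ((1 - A t) * (MS t + MI t)) ≤ k * max (A t - 1) 0 :=
                mul_le_mul_of_nonneg_left y1 hk.le
              have g7 : k * max (A t - 1) 0 ≤ k * F t := mul_le_mul_of_nonneg_left hp7F hk.le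
              linarith only [y1', y2, y3, g7]
          have hK8 : L8 ≤ σ * F t := by
            rcases lt_or_ge (H t + I t - 1) 0 with hneg | hpos
            · exact (hL8n hneg).trans (mul_nonneg hσ.le (hFnonneg t))
            · refine hL8m.trans (max_le ?_ (mul_nonneg hσ.le (hFnonneg t)))
              have z1 : μH * (1 - H t - I t) ≤ 0 := by
                linarith [mul_nonneg hμH.le (by linarith : (0:ℝ) ≤ H t + I t - 1)]
              have z2 : σ * (-I t) ≤ σ * max (-I t) 0 := mul_le_mul_of_nonneg_left hp5a hσ.le
              have e5 : σ * max (-I t) 0 ≤ σ * F t := mul_le_mul_of_nonneg_left hp5F hσ.le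
              linarith only [z1, z2, e5]
          have hLK : L1 + L2 + L3 + L4 + L5 + L6 + L7 + L8 ≤ KK * F t := by
            rw [hKKdef]
            linarith only [hK1, hK2, hK3, hK4, hK5, hK6, hK7, hK8]
          exact (Filter.Tendsto.eventually_lt_const (lt_of_le_of_lt hLK hr) hsum).frequently
        have hg := le_gronwallBound_of_liminf_deriv_right_le (f := F)
          (f' := fun t => KK * F t) (δ := 0) (K := KK) (ε := 0) (a := x) (b := z₀)
          hcontOn hderiv (le_of_eq hFx) hbound
        have hFz : F z₀ = 0 := by
          have := hg z₀ ⟨hxz.le, le_refl _⟩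
          rw [gronwallBound_ε0_δ0] at this
          exact le_antisymm this (hFnonneg z₀)
        exact ⟨z₀, hFz, hxz, min_le_left _ _⟩
    exact hsub (right_mem_Icc.mpr hT)
  intro t ht
  have hFt : max (-MS t) 0 + max (-MI t) 0 + max (-A t) 0 + max (-H t) 0 +
      max (-I t) 0 + max (MS t + MI t - 1) 0 + max (A t - 1) 0 +
      max (H t + I t - 1) 0 = 0 := by
    simpa only [hFdef] using key t ht
  have n1 := le_max_right (-MS t) 0
  have n2 := le_max_right (-MI t) 0
  have n3 := le_max_right (-A t) 0
  have n4 := le_max_right (-H t) 0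
  have n5 := le_max_right (-I t) 0
  have n6 := le_max_right (MS t + MI t - 1) 0
  have n7 := le_max_right (A t - 1) 0
  have n8 := le_max_right (H t + I t - 1) 0
  have l1 := le_max_left (-MS t) 0
  have l2 := le_max_left (-MI t) 0
  have l3 := le_max_left (-A t) 0
  have l4 := le_max_left (-H t) 0
  have l5 := le_max_left (-I t) 0
  have l6 := le_max_left (MS t + MI t - 1) 0
  have l7 := le_max_left (A t - 1) 0
  have l8 := le_max_left (H t + I t - 1) 0
  exact ⟨by linarith, by linarith, by linarith, by linarith, by linarith,
    by linarith, by linarith, by linarith⟩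
end

section
/- Let Q₀ = γ/(μ₁(γ+μ₂)), m* = γ(1 - Q₀⁻¹)/(γ + kμ₁), a* = k(1 - Q₀⁻¹)/(k + μ₂ + γ). Then E₁ = (m*, 0, a*, 1, 0) is an equilibrium of the system, i.e., all five right-hand sides vanish at E₁. -/
/-- E₁ = (m*, 0, a*, 1, 0) is an equilibrium of the system. -/
theorem E1_is_equilibrium
    (γ k μ1 μ2 μH β1 β2 σ α1 α2 : ℝ)
    (hγ : 0 < γ) (hk : 0 < k) (hμ1 : 0 < μ1) (hμ2 : 0 < μ2) (hμH : 0 < μH)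
    (hβ1 : 0 < β1) (hβ2 : 0 < β2) (hσ : 0 < σ) (hα1 : 0 ≤ α1) (hα2 : 0 ≤ α2)
    (Q0 mstar astar MS MI A H I : ℝ)
    (hQ0 : Q0 = γ / (μ1 * (γ + μ2))) (hQ0gt : 1 < Q0)
    (hm : mstar = γ * (1 - Q0⁻¹) / (γ + k * μ1))
    (ha : astar = k * (1 - Q0⁻¹) / (k + μ2 + γ))
    (hE : MS = mstar ∧ MI = 0 ∧ A = astar ∧ H = 1 ∧ I = 0) :
    γ / k * A * (1 - MS - MI) - μ1 * MS - β1 * (I / (1 + α1 * I)) * MS = 0 ∧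
    β1 * (I / (1 + α1 * I)) * MS - μ1 * MI = 0 ∧
    k * (1 - A) * (MS + MI) - μ2 * A - γ * A = 0 ∧
    μH - μH * H - β2 * (MI / (1 + α2 * MI)) * H = 0 ∧
    β2 * (MI / (1 + α2 * MI)) * H - (σ + μH) * I = 0 := by
  obtain ⟨h1, h2, h3, h4, h5⟩ := hE
  subst h1 h2 h3 h4 h5 hm ha hQ0
  have hγμ : γ + k * μ1 ≠ 0 := by positivity
  have hkμγ : k + μ2 + γ ≠ 0 := by positivity
  have hγ' : γ ≠ 0 := hγ.ne'
  have hk' : k ≠ 0 := hk.ne'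
  have hμ1' : μ1 * (γ + μ2) ≠ 0 := by positivity
  have hinv : (γ / (μ1 * (γ + μ2)))⁻¹ = μ1 * (γ + μ2) / γ := by
    rw [inv_div]
  refine ⟨?_, by simp, ?_, by simp, by simp⟩ <;>
  · rw [hinv]
    field_simp
    ring
end

section
/- If Q₀ < 1, where Q₀ = γ/(μ₁(γ+μ₂)), then the trivial equilibrium E₀ = (0,0,0,1,0) is linearly asymptotically stable: every eigenvalue of the Jacobian matrix of the system at E₀ has negative real part. -/
open Matrix

private lemma quad_neg_re (b c : ℝ) (hb : 0 < b) (hc : 0 < c) (lam : ℂ)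
    (h : lam ^ 2 + (b : ℂ) * lam + (c : ℂ) = 0) : lam.re < 0 := by
  by_contra hre
  push_neg at hre
  rw [Complex.ext_iff] at h
  obtain ⟨h1, h2⟩ := h
  simp [pow_two, Complex.add_re, Complex.add_im, Complex.mul_re, Complex.mul_im] at h1 h2
  have him2 : lam.im ^ 2 * (2 * lam.re + b) = 0 := by linear_combination lam.im * h2
  have hpos : 0 < 2 * lam.re + b := by linarith
  have him : lam.im ^ 2 = 0 := by
    rcases mul_eq_zero.mp him2 with h | h
    · exact h
    · linarith
  nlinarith [sq_nonneg lam.re, sq_nonneg lam.im]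

/-- If Q₀ < 1 then every eigenvalue of the Jacobian at E₀ = (0,0,0,1,0)
has negative real part. -/
theorem E0_linearly_stable
    (γ k μ1 μ2 μH β1 β2 σ α1 α2 : ℝ)
    (hγ : 0 < γ) (hk : 0 < k) (hμ1 : 0 < μ1) (hμ2 : 0 < μ2) (hμH : 0 < μH)
    (hβ1 : 0 < β1) (hβ2 : 0 < β2) (hσ : 0 < σ) (hα1 : 0 ≤ α1) (hα2 : 0 ≤ α2)
    (hQ0 : γ / (μ1 * (γ + μ2)) < 1)
    (J : Matrix (Fin 5) (Fin 5) ℝ)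
    (hJ : J = !![-μ1, 0, γ / k, 0, 0;
                 0, -μ1, 0, 0, 0;
                 k, k, -(μ2 + γ), 0, 0;
                 0, -β2, 0, -μH, 0;
                 0, β2, 0, 0, -(σ + μH)]) :
    ∀ lam : ℂ, lam ∈ spectrum ℂ (J.map (Complex.ofReal)) → lam.re < 0 := by
  intro lam hmem
  have hk' : (k : ℂ) ≠ 0 := by exact_mod_cast hk.ne'
  by_contra hre
  push_neg at hre
  -- for any positive real c, lam + c ≠ 0
  have hne : ∀ c : ℝ, 0 < c → lam + (c : ℂ) ≠ 0 := by
    intro c hc h0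
    have hl : lam = -(c : ℂ) := by linear_combination h0
    rw [hl] at hre
    simp at hre
    linarith
  -- get an eigenvector
  rw [← AlgEquiv.spectrum_eq (Matrix.toLinAlgEquiv' (n := Fin 5) (R := ℂ)),
    ← Module.End.hasEigenvalue_iff_mem_spectrum] at hmem
  obtain ⟨v, hv, hv0⟩ := hmem.exists_hasEigenvector
  have heq : (J.map (Complex.ofReal)).mulVec v = lam • v := by
    have := Module.End.mem_eigenspace_iff.mp hv
    rwa [Matrix.toLinAlgEquiv'_apply] at this
  subst hJ
  have key : ∀ i, (∑ j, (!![-μ1, 0, γ / k, 0, 0;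
                 0, -μ1, 0, 0, 0;
                 k, k, -(μ2 + γ), 0, 0;
                 0, -β2, 0, -μH, 0;
                 0, β2, 0, 0, -(σ + μH)] : Matrix (Fin 5) (Fin 5) ℝ).map Complex.ofReal i j * v j)
      = lam * v i := by
    intro i
    have := congrFun heq i
    simpa [Matrix.mulVec, dotProduct] using this
  have e0 := key 0
  have e1 := key 1
  have e2 := key 2
  have e3 := key 3
  have e4 := key 4
  simp [Fin.sum_univ_five, Matrix.map_apply] at e0 e1 e2 e3 e4
  push_cast at e0 e1 e2 e3 e4
  -- v 1 = 0
  have hv1 : v 1 = 0 := by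
    rcases mul_eq_zero.mp (show (lam + (μ1 : ℂ)) * v 1 = 0 by linear_combination -e1) with h | h
    · exact absurd h (hne μ1 hμ1)
    · exact h
  -- v 3 = 0
  have hv3 : v 3 = 0 := by
    rcases mul_eq_zero.mp (show (lam + (μH : ℂ)) * v 3 = 0 by
      linear_combination -e3 - (β2 : ℂ) * hv1) with h | h
    · exact absurd h (hne μH hμH)
    · exact h
  -- v 4 = 0
  have hv4 : v 4 = 0 := by
    rcases mul_eq_zero.mp (show (lam + ((σ : ℂ) + μH)) * v 4 = 0 by
      linear_combination -e4 + (β2 : ℂ) * hv1) with h | h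
    · exact absurd h (hne (σ + μH) (by linarith) ∘ (by push_cast; exact ·))
    · exact h
  -- v 2 ≠ 0
  have hv2 : v 2 ≠ 0 := by
    intro h2
    have h0 : v 0 = 0 := by
      have : (k : ℂ) * v 0 = 0 := by linear_combination e2 - (k:ℂ) * hv1 + lam * h2 + ((μ2:ℂ)+γ) * h2
      rcases mul_eq_zero.mp this with h | h
      · exact absurd h hk'
      · exact h
    apply hv0
    funext i
    fin_cases i <;> simp_all
  -- the quadratic equation
  have hkk : (k : ℂ) * (k : ℂ)⁻¹ = 1 := mul_inv_cancel₀ hk'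
  have hquad : ((lam + (μ1:ℂ)) * (lam + ((μ2:ℂ) + γ)) - γ) * ((k:ℂ) * v 2) = 0 := by
    linear_combination (-((lam + (μ1:ℂ)) * (k:ℂ))) * e2 + ((lam + (μ1:ℂ)) * (k:ℂ)^2) * hv1
      - (k:ℂ)^2 * e0 + ((γ:ℂ) * (k:ℂ) * v 2) * hkk
  have hq : (lam + (μ1:ℂ)) * (lam + ((μ2:ℂ) + γ)) - γ = 0 := by
    rcases mul_eq_zero.mp hquad with h | h
    · exact h
    · exact absurd h (mul_ne_zero hk' hv2)
  have hγlt : γ < μ1 * (γ + μ2) := by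
    have hpos : 0 < μ1 * (γ + μ2) := by positivity
    exact (div_lt_one hpos).mp hQ0
  have := quad_neg_re (μ1 + (μ2 + γ)) (μ1 * (μ2 + γ) - γ) (by linarith) (by nlinarith) lam
    (by push_cast; linear_combination hq)
  linarith
end

section
/- If Q₀ > 1, where Q₀ = γ/(μ₁(γ+μ₂)), then the equilibrium E₀ = (0,0,0,1,0) is unstable: the Jacobian of the system at E₀ has at least one eigenvalue with positive real part. -/
open Matrix

/-- If Q₀ > 1 then the Jacobian at E₀ has an eigenvalue with positive real part. -/
theorem E0_unstable
    (γ k μ1 μ2 μH β1 β2 σ α1 α2 : ℝ)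
    (hγ : 0 < γ) (hk : 0 < k) (hμ1 : 0 < μ1) (hμ2 : 0 < μ2) (hμH : 0 < μH)
    (hβ1 : 0 < β1) (hβ2 : 0 < β2) (hσ : 0 < σ) (hα1 : 0 ≤ α1) (hα2 : 0 ≤ α2)
    (hQ0 : 1 < γ / (μ1 * (γ + μ2)))
    (J : Matrix (Fin 5) (Fin 5) ℝ)
    (hJ : J = !![-μ1, 0, γ / k, 0, 0;
                 0, -μ1, 0, 0, 0;
                 k, k, -(μ2 + γ), 0, 0;
                 0, -β2, 0, -μH, 0;
                 0, β2, 0, 0, -(σ + μH)]) :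
    ∃ lam : ℂ, lam ∈ spectrum ℂ (J.map (Complex.ofReal)) ∧ 0 < lam.re := by
  -- setup
  have hden : 0 < μ1 * (γ + μ2) := by positivity
  have hc : μ1 * (μ2 + γ) - γ < 0 := by
    have := (one_lt_div hden).mp hQ0
    nlinarith
  set b : ℝ := μ1 + μ2 + γ with hb
  set c : ℝ := μ1 * (μ2 + γ) - γ with hcdef
  have hbpos : 0 < b := by positivity
  have hdisc : 0 ≤ b ^ 2 - 4 * c := by nlinarith
  set lam : ℝ := (-b + Real.sqrt (b ^ 2 - 4 * c)) / 2 with hlam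
  have hsq : Real.sqrt (b ^ 2 - 4 * c) ^ 2 = b ^ 2 - 4 * c := Real.sq_sqrt hdisc
  have hlampos : 0 < lam := by
    have : b < Real.sqrt (b ^ 2 - 4 * c) := by
      have := Real.lt_sqrt (le_of_lt hbpos) (y := b ^ 2 - 4 * c)
      rw [this]
      nlinarith
    rw [hlam]; linarith
  have hquad : lam ^ 2 + b * lam + c = 0 := by
    rw [hlam]; field_simp; nlinarith
  refine ⟨(lam : ℂ), ?_, by simpa using hlampos⟩
  rw [spectrum.mem_iff]
  intro hU
  rw [Matrix.isUnit_iff_isUnit_det, isUnit_iff_ne_zero] at hU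
  apply hU
  rw [← Matrix.exists_mulVec_eq_zero_iff]
  refine ⟨![(γ : ℂ), 0, (k : ℂ) * ((lam : ℂ) + μ1), 0, 0], ?_, ?_⟩
  · intro h
    have h0 : (γ : ℂ) = 0 := congrFun h 0
    exact hγ.ne' (by exact_mod_cast h0)
  · have hk0 : (k : ℂ) ≠ 0 := by exact_mod_cast hk.ne'
    have hquadC : (lam : ℂ) ^ 2 + (b : ℂ) * lam + c = 0 := by exact_mod_cast hquad
    subst hJ
    clear_value lam
    have hbC : (b:ℂ) = μ1 + μ2 + γ := by push_cast [hb]; ring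
    have hcC : (c:ℂ) = μ1 * (μ2 + γ) - γ := by push_cast [hcdef]; ring
    rw [hbC, hcC] at hquadC
    funext i
    fin_cases i <;>
      simp [Matrix.mulVec, dotProduct, Matrix.algebraMap_eq_diagonal,
        Fin.sum_univ_five, Matrix.diagonal, Pi.algebraMap_apply, Algebra.algebraMap_self_apply]
    · field_simp
      ring
    · linear_combination (k:ℂ) * hquadC
end

section
/- Suppose (M_S*, M_I*, A*, H*, I*) is an equilibrium of the system with all components positive. Then M_S* + M_I* = γA*/(kμ₁ + γA*) and A* = k(M_S*+M_I*)/(μ₂ + γ + k(M_S*+M_I*)), and consequently A* = a* = k(1 - Q₀⁻¹)/(k + μ₂ + γ), where Q₀ = γ/(μ₁(γ+μ₂)). -/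
/-- At a positive (endemic) equilibrium the mosquito components satisfy the
stated relations, and in particular A* = a*. -/
theorem endemic_mosquito_relations
    (γ k μ1 μ2 μH β1 β2 σ α1 α2 : ℝ)
    (hγ : 0 < γ) (hk : 0 < k) (hμ1 : 0 < μ1) (hμ2 : 0 < μ2) (hμH : 0 < μH)
    (hβ1 : 0 < β1) (hβ2 : 0 < β2) (hσ : 0 < σ) (hα1 : 0 ≤ α1) (hα2 : 0 ≤ α2)
    (Q0 : ℝ) (hQ0 : Q0 = γ / (μ1 * (γ + μ2))) (hQ0gt : 1 < Q0)
    (MS MI A H I : ℝ)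
    (hMSpos : 0 < MS) (hMIpos : 0 < MI) (hApos : 0 < A)
    (hHpos : 0 < H) (hIpos : 0 < I)
    (e1 : γ / k * A * (1 - MS - MI) - μ1 * MS - β1 * (I / (1 + α1 * I)) * MS = 0)
    (e2 : β1 * (I / (1 + α1 * I)) * MS - μ1 * MI = 0)
    (e3 : k * (1 - A) * (MS + MI) - μ2 * A - γ * A = 0)
    (e4 : μH - μH * H - β2 * (MI / (1 + α2 * MI)) * H = 0)
    (e5 : β2 * (MI / (1 + α2 * MI)) * H - (σ + μH) * I = 0) :
    MS + MI = γ * A / (k * μ1 + γ * A) ∧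
    A = k * (MS + MI) / (μ2 + γ + k * (MS + MI)) ∧
    A = k * (1 - Q0⁻¹) / (k + μ2 + γ) := by
  have hk' : k ≠ 0 := hk.ne'
  have h1 : γ / k * A * (1 - MS - MI) - μ1 * MS - μ1 * MI = 0 := by linarith [e1, e2]
  have h12 : γ * A * (1 - MS - MI) = k * μ1 * (MS + MI) := by
    have := congrArg (fun x => x * k) h1
    field_simp at this
    linarith [this]
  have hden1 : (0:ℝ) < k * μ1 + γ * A := by positivity
  have hden2 : (0:ℝ) < μ2 + γ + k * (MS + MI) := by positivity
  refine ⟨?_, ?_, ?_⟩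
  · rw [eq_div_iff hden1.ne']
    linear_combination -h12
  · rw [eq_div_iff hden2.ne']
    linear_combination -e3
  · have key : A * (k * γ * (1 - A) - (μ2 + γ) * (k * μ1 + γ * A)) = 0 := by
      linear_combination k * (1 - A) * h12 + (k * μ1 + γ * A) * e3
    have key2 : k * γ * (1 - A) - (μ2 + γ) * (k * μ1 + γ * A) = 0 :=
      (mul_eq_zero.mp key).resolve_left hApos.ne'
    have hden3 : (0:ℝ) < k + μ2 + γ := by positivity
    rw [eq_div_iff hden3.ne', hQ0]
    field_simp
    ring_nf
    ring_nf at key2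
    nlinarith [key2]
end

section
/- The normalized sensitivity index of R₀ with respect to σ equals S_σ = -σ/(2(σ+μ_H)), and with respect to k equals S_k = -kμ₁/(2(γ+kμ₁)); in particular both lie strictly between -1/2 and 0. -/
lemma sens_helper (c g g' x : ℝ) (hc : 0 < c) (hg : 0 < g) :
    x / Real.sqrt (c / g) * ((0 * g - c * g') / g ^ 2 / (2 * Real.sqrt (c / g)))
      = -(x * g') / (2 * g) := by
  have hv : 0 < c / g := div_pos hc hg
  have hs : (0:ℝ) < Real.sqrt (c / g) := Real.sqrt_pos.mpr hv
  have hss : Real.sqrt (c / g) * Real.sqrt (c / g) = c / g := Real.mul_self_sqrt hv.le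
  set t := Real.sqrt (c / g) with ht
  have htg : t * t * g = c := by rw [hss]; field_simp
  field_simp
  rw [show x * t ^ 2 * g * g' = x * (t * t * g) * g' by ring, htg]
  ring

/-- Sensitivity indices of R₀ with respect to σ and k, with bounds. -/
theorem sensitivity_sigma_k
    (β1 β2 γ k μ1 μ2 σ μH : ℝ)
    (hβ1 : 0 < β1) (hβ2 : 0 < β2) (hγ : 0 < γ) (hk : 0 < k)
    (hμ1 : 0 < μ1) (hμ2 : 0 < μ2) (hσ : 0 < σ) (hμH : 0 < μH)
    (Q0 : ℝ) (hQ0 : Q0 = γ / (μ1 * (γ + μ2))) (hQ0gt : 1 < Q0)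
    (R0σ R0k : ℝ → ℝ)
    (hR0σ : ∀ s, R0σ s = Real.sqrt (β1 * β2 * γ * (1 - Q0⁻¹)
        / (μ1 * (s + μH) * (γ + k * μ1))))
    (hR0k : ∀ kk, R0k kk = Real.sqrt (β1 * β2 * γ * (1 - Q0⁻¹)
        / (μ1 * (σ + μH) * (γ + kk * μ1))))
    (Sσ Sk : ℝ)
    (hSσ : Sσ = σ / R0σ σ * deriv R0σ σ)
    (hSk : Sk = k / R0k k * deriv R0k k) :
    Sσ = -σ / (2 * (σ + μH)) ∧ Sk = -(k * μ1) / (2 * (γ + k * μ1)) ∧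
    -(1 / 2) < Sσ ∧ Sσ < 0 ∧ -(1 / 2) < Sk ∧ Sk < 0 := by
  have hQ0pos : (0:ℝ) < Q0 := lt_trans one_pos hQ0gt
  have hQinv : Q0⁻¹ < 1 := by
    rw [inv_lt_one_iff₀]; right; exact hQ0gt
  set c := β1 * β2 * γ * (1 - Q0⁻¹) with hc_def
  have hc : 0 < c := by
    have : 0 < 1 - Q0⁻¹ := by linarith
    positivity
  have hγk : 0 < γ + k * μ1 := by positivity
  have hσH : 0 < σ + μH := by positivity
  -- derivative in σ
  have hgσ : 0 < μ1 * (σ + μH) * (γ + k * μ1) := by positivity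
  have hdσ : HasDerivAt (fun s => μ1 * (s + μH) * (γ + k * μ1))
      (μ1 * 1 * (γ + k * μ1)) σ :=
    (((hasDerivAt_id σ).add_const μH).const_mul μ1).mul_const _
  have hfσ : HasDerivAt (fun s => c / (μ1 * (s + μH) * (γ + k * μ1)))
      ((0 * (μ1 * (σ + μH) * (γ + k * μ1)) - c * (μ1 * 1 * (γ + k * μ1)))
        / (μ1 * (σ + μH) * (γ + k * μ1)) ^ 2) σ :=
    (hasDerivAt_const σ c).div hdσ (ne_of_gt hgσ)
  have hvσ : 0 < c / (μ1 * (σ + μH) * (γ + k * μ1)) := div_pos hc hgσ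
  have hRσeq : R0σ = fun s => Real.sqrt (c / (μ1 * (s + μH) * (γ + k * μ1))) :=
    funext hR0σ
  have hderσ : HasDerivAt R0σ
      ((0 * (μ1 * (σ + μH) * (γ + k * μ1)) - c * (μ1 * 1 * (γ + k * μ1)))
        / (μ1 * (σ + μH) * (γ + k * μ1)) ^ 2
        / (2 * Real.sqrt (c / (μ1 * (σ + μH) * (γ + k * μ1))))) σ := by
    rw [hRσeq]
    exact hfσ.sqrt (ne_of_gt hvσ)
  have hSσval : Sσ = -σ / (2 * (σ + μH)) := by
    rw [hSσ, hderσ.deriv, hR0σ]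
    rw [show σ / Real.sqrt (c / (μ1 * (σ + μH) * (γ + k * μ1))) *
        ((0 * (μ1 * (σ + μH) * (γ + k * μ1)) - c * (μ1 * 1 * (γ + k * μ1)))
          / (μ1 * (σ + μH) * (γ + k * μ1)) ^ 2
          / (2 * Real.sqrt (c / (μ1 * (σ + μH) * (γ + k * μ1))))) =
        -(σ * (μ1 * 1 * (γ + k * μ1))) / (2 * (μ1 * (σ + μH) * (γ + k * μ1)))
      from sens_helper c _ _ σ hc hgσ]
    field_simp
  -- derivative in k
  have hμσ : 0 < μ1 * (σ + μH) := by positivity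
  have hdk : HasDerivAt (fun kk => μ1 * (σ + μH) * (γ + kk * μ1))
      (μ1 * (σ + μH) * (1 * μ1)) k :=
    (((hasDerivAt_id k).mul_const μ1).const_add γ).const_mul _
  have hgk : 0 < μ1 * (σ + μH) * (γ + k * μ1) := hgσ
  have hfk : HasDerivAt (fun kk => c / (μ1 * (σ + μH) * (γ + kk * μ1)))
      ((0 * (μ1 * (σ + μH) * (γ + k * μ1)) - c * (μ1 * (σ + μH) * (1 * μ1)))
        / (μ1 * (σ + μH) * (γ + k * μ1)) ^ 2) k :=
    (hasDerivAt_const k c).div hdk (ne_of_gt hgk)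
  have hRkeq : R0k = fun kk => Real.sqrt (c / (μ1 * (σ + μH) * (γ + kk * μ1))) :=
    funext hR0k
  have hderk : HasDerivAt R0k
      ((0 * (μ1 * (σ + μH) * (γ + k * μ1)) - c * (μ1 * (σ + μH) * (1 * μ1)))
        / (μ1 * (σ + μH) * (γ + k * μ1)) ^ 2
        / (2 * Real.sqrt (c / (μ1 * (σ + μH) * (γ + k * μ1))))) k := by
    rw [hRkeq]
    exact hfk.sqrt (ne_of_gt (div_pos hc hgk))
  have hSkval : Sk = -(k * μ1) / (2 * (γ + k * μ1)) := by
    rw [hSk, hderk.deriv, hR0k]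
    rw [show k / Real.sqrt (c / (μ1 * (σ + μH) * (γ + k * μ1))) *
        ((0 * (μ1 * (σ + μH) * (γ + k * μ1)) - c * (μ1 * (σ + μH) * (1 * μ1)))
          / (μ1 * (σ + μH) * (γ + k * μ1)) ^ 2
          / (2 * Real.sqrt (c / (μ1 * (σ + μH) * (γ + k * μ1))))) =
        -(k * (μ1 * (σ + μH) * (1 * μ1))) / (2 * (μ1 * (σ + μH) * (γ + k * μ1)))
      from sens_helper c _ _ k hc hgk]
    field_simp
  refine ⟨hSσval, hSkval, ?_, ?_, ?_, ?_⟩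
  · rw [hSσval, neg_div, neg_lt_neg_iff,
      div_lt_div_iff₀ (by positivity) (by norm_num : (0:ℝ) < 2)]
    nlinarith
  · rw [hSσval]; apply div_neg_of_neg_of_pos; · linarith
    positivity
  · rw [hSkval, neg_div, neg_lt_neg_iff,
      div_lt_div_iff₀ (by positivity) (by norm_num : (0:ℝ) < 2)]
    nlinarith
  · rw [hSkval]; apply div_neg_of_neg_of_pos; · nlinarith
    positivity
end

section
/- For g₁(I) = I/(1+α₁I) and g₂(M) = M/(1+α₂M) with α₁, α₂ > 0, one has g₁'(0) = 1, g₂'(0) = 1, g₁''(0) = -2α₁, and g₂''(0) = -2α₂; consequently the bifurcation coefficient a = 2v₂w₁w₅β₁*g₁'(0) + v₂w₅²β₁*m*g₁''(0) + 2v₅w₂w₄β₂g₂'(0) + v₅w₂²β₂g₂''(0) is negative and b = v₂w₅m*g₁'(0) is positive, where v₂ = β₂/(α₂(σ+μ_H+μ₁)), v₅ = μ₁/(σ+μ_H+μ₁), w₁ = -α₂(σ+μ_H)/β₂, w₂ = α₂(σ+μ_H)/β₂, w₄ = -(σ+μ_H)/μ_H, w₅ = 1. -/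
lemma holling_hasDeriv (α : ℝ) (x : ℝ) (hx : 1 + α * x ≠ 0) :
    HasDerivAt (fun y => y / (1 + α * y)) ((1 + α * x)^2)⁻¹ x := by
  have hd : HasDerivAt (fun y : ℝ => 1 + α * y) α x := by
    simpa using ((hasDerivAt_id x).const_mul α).const_add 1
  have := (hasDerivAt_id' x).fun_div hd hx
  refine this.congr_deriv ?_
  field_simp
  ring

lemma holling_deriv_eventually (α : ℝ) :
    ∀ᶠ x in nhds (0:ℝ), deriv (fun y => y / (1 + α * y)) x = ((1 + α * x)^2)⁻¹ := by
  have hopen : IsOpen {x : ℝ | 1 + α * x ≠ 0} :=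
    isOpen_ne.preimage (by continuity)
  have h0 : (0:ℝ) ∈ {x : ℝ | 1 + α * x ≠ 0} := by simp
  filter_upwards [hopen.mem_nhds h0] with x hx
  exact (holling_hasDeriv α x hx).deriv

lemma holling_d1 (α : ℝ) : deriv (fun y : ℝ => y / (1 + α * y)) 0 = 1 := by
  have := (holling_hasDeriv α 0 (by simp)).deriv
  simpa using this

lemma holling_d2 (α : ℝ) : deriv (deriv (fun y : ℝ => y / (1 + α * y))) 0 = -2 * α := by
  have heq := holling_deriv_eventually α
  rw [Filter.EventuallyEq.deriv_eq heq]
  have hd : HasDerivAt (fun y : ℝ => 1 + α * y) α 0 := by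
    simpa using ((hasDerivAt_id (0:ℝ)).const_mul α).const_add 1
  have h2 : HasDerivAt (fun x : ℝ => ((1 + α * x)^2)⁻¹) (-2 * α) 0 := by
    have hp : HasDerivAt (fun x : ℝ => (1 + α * x)^2) (2 * α) 0 := by
      have := hd.fun_pow 2
      simpa using this
    have := hp.fun_inv (by norm_num)
    refine this.congr_deriv ?_
    norm_num
  exact h2.deriv

/-- Derivatives of the Holling II forces of infection at 0, and signs of the
bifurcation coefficients a and b. -/
theorem bifurcation_coefficients
    (β1star β2 μ1 μH σ α1 α2 mstar : ℝ)
    (hβ1star : 0 < β1star) (hβ2 : 0 < β2) (hμ1 : 0 < μ1) (hμH : 0 < μH)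
    (hσ : 0 < σ) (hα1 : 0 < α1) (hα2 : 0 < α2) (hm : 0 < mstar)
    (g1 g2 : ℝ → ℝ)
    (hg1 : ∀ x, g1 x = x / (1 + α1 * x))
    (hg2 : ∀ x, g2 x = x / (1 + α2 * x))
    (v2 v5 w1 w2 w4 w5 a b : ℝ)
    (hv2 : v2 = β2 / (α2 * (σ + μH + μ1)))
    (hv5 : v5 = μ1 / (σ + μH + μ1))
    (hw1 : w1 = -(α2 * (σ + μH)) / β2)
    (hw2 : w2 = α2 * (σ + μH) / β2)
    (hw4 : w4 = -(σ + μH) / μH)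
    (hw5 : w5 = 1)
    (ha : a = 2 * v2 * w1 * w5 * β1star * deriv g1 0
        + v2 * w5 ^ 2 * β1star * mstar * deriv (deriv g1) 0
        + 2 * v5 * w2 * w4 * β2 * deriv g2 0
        + v5 * w2 ^ 2 * β2 * deriv (deriv g2) 0)
    (hb : b = v2 * w5 * mstar * deriv g1 0) :
    deriv g1 0 = 1 ∧ deriv g2 0 = 1 ∧
    deriv (deriv g1) 0 = -2 * α1 ∧ deriv (deriv g2) 0 = -2 * α2 ∧
    a < 0 ∧ 0 < b := by
  have hg1' : g1 = fun x => x / (1 + α1 * x) := funext hg1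
  have hg2' : g2 = fun x => x / (1 + α2 * x) := funext hg2
  have d1 : deriv g1 0 = 1 := by rw [hg1']; exact holling_d1 α1
  have d2 : deriv g2 0 = 1 := by rw [hg2']; exact holling_d1 α2
  have dd1 : deriv (deriv g1) 0 = -2 * α1 := by rw [hg1']; exact holling_d2 α1
  have dd2 : deriv (deriv g2) 0 = -2 * α2 := by rw [hg2']; exact holling_d2 α2
  refine ⟨d1, d2, dd1, dd2, ?_, ?_⟩
  · have hv2pos : 0 < v2 := by rw [hv2]; positivity
    have hv5pos : 0 < v5 := by rw [hv5]; positivity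
    have hw1neg : w1 < 0 := by
      rw [hw1, neg_div]
      have : 0 < α2 * (σ + μH) / β2 := by positivity
      linarith
    have hw2pos : 0 < w2 := by rw [hw2]; positivity
    have hw4neg : w4 < 0 := by
      rw [hw4, neg_div]
      have : 0 < (σ + μH) / μH := by positivity
      linarith
    rw [ha, hw5, d1, d2, dd1, dd2]
    have t1 : 2 * v2 * w1 * 1 * β1star * 1 < 0 := by
      have h := mul_neg_of_pos_of_neg (mul_pos hv2pos hβ1star) hw1neg
      linarith [h]
    have t2 : v2 * 1 ^ 2 * β1star * mstar * (-2 * α1) < 0 := by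
      have h := mul_pos (mul_pos (mul_pos hv2pos hβ1star) hm) hα1
      linarith [h]
    have t3 : 2 * v5 * w2 * w4 * β2 * 1 < 0 := by
      have h := mul_neg_of_pos_of_neg (mul_pos (mul_pos hv5pos hw2pos) hβ2) hw4neg
      linarith [h]
    have t4 : v5 * w2 ^ 2 * β2 * (-2 * α2) < 0 := by
      have h := mul_pos (mul_pos (mul_pos hv5pos (mul_pos hw2pos hw2pos)) hβ2) hα2
      linarith [h]
    linarith
  · have hv2pos : 0 < v2 := by rw [hv2]; positivity
    rw [hb, hw5, d1]
    have h := mul_pos hv2pos hm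
    linarith [h]
end
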